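/- Let (W, S) be a Coxeter system of type D_n realized as even signed permutations inside W_{B_n}, with canonical lifts x ↦ x^B to the Artin group A_{B_n} and x ↦ x^D to the Artin group A_{D_n}. Let π₁: A_{B_n} → Ã_{B_n} be the quotient by the normal closure of σ_0^2, and identify A_{D_n} with the subgroup of Ã_{B_n} generated by π₁(σ_0 σ_1 σ_0), π₁(σ_1), ..., π₁(σ_{n−1}). Then for every x ∈ W_{D_n}, π₁(x^B) = x^D; that is, the canonical positive B_n-lift of an element of W_{D_n}, pushed to the quotient Ã_{B_n}, coincides with its canonical positive D_n-lift. -/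

import Mathlib

/-- The group of signed permutations: permutations `w` of `ℤ` with `w (-i) = - w i`
which move only `{-n, …, -1, 1, …, n}`. -/
def signedPermGroup (n : ℕ) : Subgroup (Equiv.Perm ℤ) where
  carrier := {w | (∀ i : ℤ, w (-i) = -(w i)) ∧ ∀ i : ℤ, (n : ℤ) < |i| → w i = i}
  one_mem' := by constructor <;> intro i <;> simp
  mul_mem' := by
    rintro a b ⟨ha1, ha2⟩ ⟨hb1, hb2⟩
    refine ⟨fun i => ?_, fun i hi => ?_⟩
    · simp [Equiv.Perm.mul_apply, hb1, ha1]
    · have h1 : b i = i := hb2 i hi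
      simp [Equiv.Perm.mul_apply, h1, ha2 i hi]
  inv_mem' := by
    rintro a ⟨ha1, ha2⟩
    refine ⟨fun i => ?_, fun i hi => ?_⟩
    · apply a.injective
      rw [Equiv.Perm.coe_inv, Equiv.apply_symm_apply, ha1, Equiv.apply_symm_apply]
    · apply a.injective
      rw [Equiv.Perm.coe_inv, Equiv.apply_symm_apply, ha2 i hi]

/-- The standard Coxeter generators of type `Bₙ` as signed permutations:
`s 0 = (-1, 1)` and `s i = (i, i+1)(-i, -i-1)`. -/
def sgen : ℕ → Equiv.Perm ℤ := fun i =>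
  if i = 0 then Equiv.swap (-1 : ℤ) 1
  else Equiv.swap (i : ℤ) ((i : ℤ) + 1) * Equiv.swap (-(i : ℤ)) (-((i : ℤ) + 1))

/-- The standard Coxeter generators of type `Dₙ`:  `t 0 = s 0 * s 1 * s 0`, `t i = s i`. -/
def tgen : ℕ → Equiv.Perm ℤ := fun i =>
  if i = 0 then sgen 0 * sgen 1 * sgen 0 else sgen i

/-- Word length of `g` with respect to a generating set `S` (the Coxeter length function
when `S` is the simple system of a Coxeter group). -/
noncomputable def wordLength {G : Type*} [Group G] (S : Set G) (g : G) : ℕ :=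
  sInf {k | ∃ l : List G, (∀ x ∈ l, x ∈ S) ∧ l.length = k ∧ l.prod = g}

/-- Number of `i ∈ {1, …, n}` with `w i < 0`. -/
noncomputable def negCount (n : ℕ) (w : Equiv.Perm ℤ) : ℕ :=
  ((Finset.Icc (1 : ℤ) (n : ℤ)).filter (fun i => w i < 0)).card

/-- The alternating braid word `aba⋯` (`m` letters) in the free group. -/
def braidWord {α : Type*} (m : ℕ) (a b : α) : FreeGroup α :=
  ((List.range m).map (fun k => FreeGroup.of (if k % 2 = 0 then a else b))).prod

/-- The Artin (braid) relations associated to a Coxeter-type matrix `m`. -/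
def artinRels {n : ℕ} (m : Fin n → Fin n → ℕ) : Set (FreeGroup (Fin n)) :=
  {r | ∃ i j : Fin n, i ≠ j ∧ r = braidWord (m i j) i j * (braidWord (m j i) j i)⁻¹}

/-- The Artin group of a Coxeter-type matrix `m`: generators `Fin n`, braid relations only. -/
abbrev ArtinGroup {n : ℕ} (m : Fin n → Fin n → ℕ) : Type := PresentedGroup (artinRels m)

/-- The Coxeter matrix of type `Bₙ` (the bond between generators `0` and `1` is `4`). -/
def mB (n : ℕ) : Fin n → Fin n → ℕ := fun i j =>
  if i = j then 1
  else if (i.val = 0 ∧ j.val = 1) ∨ (i.val = 1 ∧ j.val = 0) then 4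
  else if i.val + 1 = j.val ∨ j.val + 1 = i.val then 3 else 2

/-- The Coxeter matrix of type `Dₙ` (generator `0` is joined to generator `2`,
and `1, 2, …, n-1` form a chain). -/
def mD (n : ℕ) : Fin n → Fin n → ℕ := fun i j =>
  if i = j then 1
  else if (i.val = 0 ∧ j.val = 2) ∨ (i.val = 2 ∧ j.val = 0) then 3
  else if (i.val = 0 ∧ j.val = 1) ∨ (i.val = 1 ∧ j.val = 0) then 2
  else if i.val + 1 = j.val ∨ j.val + 1 = i.val then 3 else 2

/-- The Coxeter matrix of type `Aₙ` (a chain). -/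
def mA (n : ℕ) : Fin n → Fin n → ℕ := fun i j =>
  if i = j then 1
  else if i.val + 1 = j.val ∨ j.val + 1 = i.val then 3 else 2

/-- The normal closure of `{σ₀²}` in the Artin group of type `Bₙ`. -/
def sigma0sqClosure (n : ℕ) : Subgroup (ArtinGroup (mB n)) :=
  Subgroup.normalClosure {g | ∃ i : Fin n, i.val = 0 ∧ g = (PresentedGroup.of i) ^ 2}

instance (n : ℕ) : (sigma0sqClosure n).Normal := Subgroup.normalClosure_normal

/-- The quotient `Ã_{Bₙ} = A_{Bₙ}/⟨⟨σ₀²⟩⟩`. -/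
abbrev AtilB (n : ℕ) := ArtinGroup (mB n) ⧸ sigma0sqClosure n

/-- The quotient map `π₁ : A_{Bₙ} → Ã_{Bₙ}`. -/
def piOne (n : ℕ) : ArtinGroup (mB n) →* AtilB n := QuotientGroup.mk' (sigma0sqClosure n)

/-! ### Auxiliary development -/

section Aux

open Equiv Finset

lemma sgen0_apply (x : ℤ) : sgen 0 x =
    if x = -1 then 1 else if x = 1 then -1 else x := by
  simp [sgen, Equiv.swap_apply_def]

lemma sgenk_apply (k : ℕ) (hk : 1 ≤ k) (x : ℤ) : sgen k x =
    if x = (k:ℤ) then (k:ℤ)+1 else if x = (k:ℤ)+1 then (k:ℤ)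
    else if x = -(k:ℤ) then -((k:ℤ)+1) else if x = -((k:ℤ)+1) then -(k:ℤ) else x := by
  have hk0 : k ≠ 0 := by omega
  have hkz : (1:ℤ) ≤ (k:ℤ) := by exact_mod_cast hk
  simp only [sgen, if_neg hk0, Equiv.Perm.mul_apply, Equiv.swap_apply_def]
  split_ifs <;> omega

lemma sgen1_apply (x : ℤ) : sgen 1 x =
    if x = 1 then 2 else if x = 2 then 1 else if x = -1 then -2 else if x = -2 then -1 else x := by
  have := sgenk_apply 1 (le_refl 1) x
  push_cast at this
  exact this

lemma tgen0_apply (x : ℤ) : tgen 0 x =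
    if x = 1 then -2 else if x = 2 then -1 else if x = -1 then 2 else if x = -2 then 1 else x := by
  show (sgen 0 * sgen 1 * sgen 0) x = _
  simp only [Equiv.Perm.mul_apply, sgen0_apply, sgen1_apply]
  split_ifs <;> first | exact (False.elim ‹False›) | omega

lemma tgenk_eq (k : ℕ) (hk : 1 ≤ k) : tgen k = sgen k := by
  have : k ≠ 0 := by omega
  simp [tgen, this]

lemma sgen0_invol : sgen 0 * sgen 0 = 1 := by
  ext x
  simp only [Equiv.Perm.mul_apply, sgen0_apply, Equiv.Perm.one_apply]
  split_ifs <;> first | exact (False.elim ‹False›) | omega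

lemma sgenk_invol (k : ℕ) (hk : 1 ≤ k) : sgen k * sgen k = 1 := by
  ext x
  simp only [Equiv.Perm.mul_apply, sgenk_apply k hk, Equiv.Perm.one_apply]
  have hkz : (1:ℤ) ≤ (k:ℤ) := by exact_mod_cast hk
  split_ifs <;> omega

lemma tgen_invol (k : ℕ) : tgen k * tgen k = 1 := by
  rcases Nat.eq_zero_or_pos k with rfl | hk
  · ext x
    simp only [Equiv.Perm.mul_apply, tgen0_apply, Equiv.Perm.one_apply]
    split_ifs <;> first | exact (False.elim ‹False›) | omega
  · rw [tgenk_eq k hk]; exact sgenk_invol k hk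

lemma mem_sgp {n : ℕ} {w : Equiv.Perm ℤ} :
    w ∈ signedPermGroup n ↔
      (∀ i : ℤ, w (-i) = -(w i)) ∧ ∀ i : ℤ, (n : ℤ) < |i| → w i = i :=
  Iff.rfl

lemma sgen_mem {n i : ℕ} (hi : i < n) : sgen i ∈ signedPermGroup n := by
  have hn : (1:ℤ) ≤ (n:ℤ) := by exact_mod_cast Nat.one_le_iff_ne_zero.mpr (by omega)
  rcases Nat.eq_zero_or_pos i with rfl | hk
  · refine ⟨fun x => ?_, fun x hx => ?_⟩
    · simp only [sgen0_apply]; split_ifs <;> omega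
    · rw [lt_abs] at hx
      simp only [sgen0_apply]; split_ifs <;> omega
  · have hiz : (1:ℤ) ≤ (i:ℤ) := by exact_mod_cast hk
    have hin : (i:ℤ) + 1 ≤ (n:ℤ) := by exact_mod_cast hi
    refine ⟨fun x => ?_, fun x hx => ?_⟩
    · simp only [sgenk_apply i hk]; split_ifs <;> omega
    · rw [lt_abs] at hx
      simp only [sgenk_apply i hk]; split_ifs <;> omega

lemma tgen_mem {n i : ℕ} (hn : 2 ≤ n) (hi : i < n) : tgen i ∈ signedPermGroup n := by
  rcases Nat.eq_zero_or_pos i with rfl | hk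
  · show sgen 0 * sgen 1 * sgen 0 ∈ _
    exact Subgroup.mul_mem _ (Subgroup.mul_mem _ (sgen_mem (by omega)) (sgen_mem (by omega)))
      (sgen_mem (by omega))
  · rw [tgenk_eq i hk]; exact sgen_mem hi

lemma sgp_zero {n : ℕ} {w : Equiv.Perm ℤ} (hw : w ∈ signedPermGroup n) : w 0 = 0 := by
  have := hw.1 0
  simp at this
  omega

lemma sgp_ne_zero {n : ℕ} {w : Equiv.Perm ℤ} (hw : w ∈ signedPermGroup n) {x : ℤ}
    (hx : x ≠ 0) : w x ≠ 0 := by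
  intro h
  exact hx (w.injective (by rw [h, sgp_zero hw]))

/-- Positive roots of type `Bₙ`, encoded as pairs. -/
noncomputable def RB (n : ℕ) : Finset (ℤ × ℤ) :=
  ((Finset.Icc (-(n:ℤ)) (n:ℤ)) ×ˢ (Finset.Icc (-(n:ℤ)) (n:ℤ))).filter
    (fun p => p.1 ≠ 0 ∧ p.2 ≠ 0 ∧ p.1 < p.2 ∧ 0 ≤ p.1 + p.2)

/-- Positive roots of type `Dₙ`, encoded as pairs. -/
noncomputable def RD (n : ℕ) : Finset (ℤ × ℤ) :=
  ((Finset.Icc (-(n:ℤ)) (n:ℤ)) ×ˢ (Finset.Icc (-(n:ℤ)) (n:ℤ))).filter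
    (fun p => p.1 ≠ 0 ∧ p.2 ≠ 0 ∧ p.1 < p.2 ∧ 0 < p.1 + p.2)

lemma mem_RB {n : ℕ} {p : ℤ × ℤ} : p ∈ RB n ↔
    -(n:ℤ) ≤ p.1 ∧ p.1 ≤ n ∧ -(n:ℤ) ≤ p.2 ∧ p.2 ≤ n ∧
      p.1 ≠ 0 ∧ p.2 ≠ 0 ∧ p.1 < p.2 ∧ 0 ≤ p.1 + p.2 := by
  simp [RB, Finset.mem_filter, Finset.mem_product, Finset.mem_Icc]
  tauto

lemma mem_RD {n : ℕ} {p : ℤ × ℤ} : p ∈ RD n ↔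
    -(n:ℤ) ≤ p.1 ∧ p.1 ≤ n ∧ -(n:ℤ) ≤ p.2 ∧ p.2 ≤ n ∧
      p.1 ≠ 0 ∧ p.2 ≠ 0 ∧ p.1 < p.2 ∧ 0 < p.1 + p.2 := by
  simp [RD, Finset.mem_filter, Finset.mem_product, Finset.mem_Icc]
  tauto

/-- Inversion count on a root set. -/
def Ninv (R : Finset (ℤ × ℤ)) (w : Equiv.Perm ℤ) : ℕ :=
  (R.filter (fun p => w p.2 < w p.1)).card

/-- Type-`B` length statistic. -/
noncomputable def NB (n : ℕ) (w : Equiv.Perm ℤ) : ℕ := Ninv (RB n) w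

/-- Type-`D` length statistic. -/
noncomputable def ND (n : ℕ) (w : Equiv.Perm ℤ) : ℕ := Ninv (RD n) w

/-- Generic one-step lemma for the inversion statistic. -/
lemma Ninv_step (R : Finset (ℤ × ℤ)) (t w : Equiv.Perm ℤ) (p₀ : ℤ × ℤ) (hp₀ : p₀ ∈ R)
    (φ : ℤ × ℤ → ℤ × ℤ)
    (hmem : ∀ p ∈ R, p ≠ p₀ → φ p ∈ R ∧ φ p ≠ p₀)
    (hinv : ∀ p ∈ R, p ≠ p₀ → φ (φ p) = p)
    (hind : ∀ p ∈ R, p ≠ p₀ → (w (t p.2) < w (t p.1) ↔ w (φ p).2 < w (φ p).1))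
    (ht1 : t p₀.1 = p₀.2) (ht2 : t p₀.2 = p₀.1) :
    Ninv R (w * t) + (if w p₀.2 < w p₀.1 then 1 else 0)
      = Ninv R w + (if w p₀.1 < w p₀.2 then 1 else 0) := by
  classical
  have key : ∀ (c : ℤ × ℤ → Prop) [DecidablePred c],
      (R.filter c).card
        = ((R.erase p₀).filter c).card + (if c p₀ then 1 else 0) := by
    intro c _
    conv_lhs => rw [← Finset.insert_erase hp₀]
    rw [Finset.filter_insert]
    split_ifs with h
    · rw [Finset.card_insert_of_notMem (by simp)]
    · simp
  have hmul : ∀ p : ℤ × ℤ, (w * t) p.2 < (w * t) p.1 ↔ w (t p.2) < w (t p.1) := by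
    intro p; simp [Equiv.Perm.mul_apply]
  have e1 : Ninv R (w * t) =
      ((R.erase p₀).filter (fun p => w (t p.2) < w (t p.1))).card
        + (if w p₀.1 < w p₀.2 then 1 else 0) := by
    unfold Ninv
    rw [Finset.filter_congr (fun p _ => by rw [hmul p]), key]
    congr 1
    rw [ht1, ht2]
  have e2 : Ninv R w =
      ((R.erase p₀).filter (fun p => w p.2 < w p.1)).card
        + (if w p₀.2 < w p₀.1 then 1 else 0) := by
    unfold Ninv
    rw [key]
  have e3 : ((R.erase p₀).filter (fun p => w (t p.2) < w (t p.1))).card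
      = ((R.erase p₀).filter (fun p => w p.2 < w p.1)).card := by
    refine Finset.card_bij' (fun p _ => φ p) (fun p _ => φ p) ?_ ?_ ?_ ?_
    · intro p hp
      simp only [Finset.mem_filter, Finset.mem_erase] at hp ⊢
      obtain ⟨⟨hne, hpR⟩, hcond⟩ := hp
      obtain ⟨h1, h2⟩ := hmem p hpR hne
      exact ⟨⟨h2, h1⟩, (hind p hpR hne).mp hcond⟩
    · intro p hp
      simp only [Finset.mem_filter, Finset.mem_erase] at hp ⊢
      obtain ⟨⟨hne, hpR⟩, hcond⟩ := hp
      obtain ⟨h1, h2⟩ := hmem p hpR hne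
      refine ⟨⟨h2, h1⟩, ?_⟩
      rw [hind (φ p) h1 h2, hinv p hpR hne]
      exact hcond
    · intro p hp
      simp only [Finset.mem_filter, Finset.mem_erase] at hp
      exact hinv p hp.1.2 hp.1.1
    · intro p hp
      simp only [Finset.mem_filter, Finset.mem_erase] at hp
      exact hinv p hp.1.2 hp.1.1
  rw [e1, e2, e3]
  ring
lemma mem_RB' {n : ℕ} {a b : ℤ} : (a, b) ∈ RB n ↔
    -(n:ℤ) ≤ a ∧ a ≤ n ∧ -(n:ℤ) ≤ b ∧ b ≤ n ∧ a ≠ 0 ∧ b ≠ 0 ∧ a < b ∧ 0 ≤ a + b :=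
  mem_RB

lemma mem_RD' {n : ℕ} {a b : ℤ} : (a, b) ∈ RD n ↔
    -(n:ℤ) ≤ a ∧ a ≤ n ∧ -(n:ℤ) ≤ b ∧ b ≤ n ∧ a ≠ 0 ∧ b ≠ 0 ∧ a < b ∧ 0 < a + b :=
  mem_RD

lemma sgen0_sgen0 (x : ℤ) : sgen 0 (sgen 0 x) = x := by
  simp only [sgen0_apply]; split_ifs <;> first | exact (False.elim ‹False›) | omega

lemma sgenk_sgenk (k : ℕ) (hk : 1 ≤ k) (x : ℤ) : sgen k (sgen k x) = x := by
  have hkz : (1:ℤ) ≤ (k:ℤ) := by exact_mod_cast hk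
  simp only [sgenk_apply k hk]; split_ifs <;> first | exact (False.elim ‹False›) | omega

lemma tgen0_tgen0 (x : ℤ) : tgen 0 (tgen 0 x) = x := by
  simp only [tgen0_apply]; split_ifs <;> first | exact (False.elim ‹False›) | omega

lemma sgen0_neg (x : ℤ) : sgen 0 (-x) = -(sgen 0 x) := by
  simp only [sgen0_apply]; split_ifs <;> first | exact (False.elim ‹False›) | omega

lemma sgenk_neg (k : ℕ) (hk : 1 ≤ k) (x : ℤ) : sgen k (-x) = -(sgen k x) := by
  have hkz : (1:ℤ) ≤ (k:ℤ) := by exact_mod_cast hk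
  simp only [sgenk_apply k hk]; split_ifs <;> first | exact (False.elim ‹False›) | omega

lemma tgen0_neg (x : ℤ) : tgen 0 (-x) = -(tgen 0 x) := by
  simp only [tgen0_apply]; split_ifs <;> first | exact (False.elim ‹False›) | omega

/-- The canonicalized componentwise action of `t` on root pairs. -/
def nuCan (t : Equiv.Perm ℤ) (p : ℤ × ℤ) : ℤ × ℤ :=
  if 0 < t p.1 + t p.2 ∨ (t p.1 + t p.2 = 0 ∧ t p.1 < t p.2) then (t p.1, t p.2)
  else (-(t p.2), -(t p.1))

lemma nuCan_mk (t : Equiv.Perm ℤ) (a b : ℤ) : nuCan t (a, b) =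
    if 0 < t a + t b ∨ (t a + t b = 0 ∧ t a < t b) then (t a, t b)
    else (-(t b), -(t a)) := rfl

/-- Generic one-step lemma, odd involution version. -/
lemma Ninv_step' (R : Finset (ℤ × ℤ)) (t w : Equiv.Perm ℤ) (p₀ : ℤ × ℤ) (hp₀ : p₀ ∈ R)
    (hodd : ∀ x, t (-x) = -(t x)) (htt : ∀ x, t (t x) = x)
    (hwodd : ∀ x, w (-x) = -(w x))
    (hRsub : ∀ p ∈ R, p.1 < p.2 ∧ 0 ≤ p.1 + p.2)
    (hmem : ∀ p ∈ R, p ≠ p₀ → nuCan t p ∈ R ∧ nuCan t p ≠ p₀)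
    (ht1 : t p₀.1 = p₀.2) (ht2 : t p₀.2 = p₀.1) :
    Ninv R (w * t) + (if w p₀.2 < w p₀.1 then 1 else 0)
      = Ninv R w + (if w p₀.1 < w p₀.2 then 1 else 0) := by
  refine Ninv_step R t w p₀ hp₀ (nuCan t) hmem ?_ ?_ ht1 ht2
  · rintro ⟨a, b⟩ hp hne
    obtain ⟨hab, hsum⟩ := hRsub _ hp
    simp only at hab hsum
    by_cases hc : 0 < t a + t b ∨ (t a + t b = 0 ∧ t a < t b)
    · have e1 : nuCan t (a, b) = (t a, t b) := by rw [nuCan_mk, if_pos hc]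
      rw [e1, nuCan_mk, htt, htt]
      rw [if_pos (by omega)]
    · have e1 : nuCan t (a, b) = (-(t b), -(t a)) := by rw [nuCan_mk, if_neg hc]
      rw [e1, nuCan_mk, hodd, hodd, htt, htt]
      rcases lt_or_eq_of_le hsum with h | h
      · rw [if_neg (by omega)]
        simp
      · rw [if_pos (by omega)]
        rw [Prod.mk.injEq]
        omega
  · rintro ⟨a, b⟩ hp hne
    by_cases hc : 0 < t a + t b ∨ (t a + t b = 0 ∧ t a < t b)
    · have e1 : nuCan t (a, b) = (t a, t b) := by rw [nuCan_mk, if_pos hc]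
      rw [e1]
    · have e1 : nuCan t (a, b) = (-(t b), -(t a)) := by rw [nuCan_mk, if_neg hc]
      rw [e1]
      simp only
      rw [hwodd, hwodd]
      omega

/-- Step lemma: type `B`, generator `s_k`, `k ≥ 1`. -/
lemma NB_step_sk (n k : ℕ) (hk : 1 ≤ k) (hkn : k + 1 ≤ n) (w : Equiv.Perm ℤ)
    (hwodd : ∀ x, w (-x) = -(w x)) :
    NB n (w * sgen k) + (if w ((k:ℤ)+1) < w (k:ℤ) then 1 else 0)
      = NB n w + (if w (k:ℤ) < w ((k:ℤ)+1) then 1 else 0) := by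
  have hkz : (1:ℤ) ≤ (k:ℤ) := by exact_mod_cast hk
  have hkn' : (k:ℤ) + 1 ≤ (n:ℤ) := by exact_mod_cast hkn
  have := Ninv_step' (RB n) (sgen k) w ((k:ℤ), (k:ℤ)+1)
    (by rw [mem_RB']; omega)
    (sgenk_neg k hk) (sgenk_sgenk k hk) hwodd
    (fun p hp => by rw [mem_RB] at hp; exact ⟨hp.2.2.2.2.2.2.1, hp.2.2.2.2.2.2.2⟩)
    (by
      rintro ⟨a, b⟩ hp hne
      rw [mem_RB'] at hp
      have hne' : ¬(a = (k:ℤ) ∧ b = (k:ℤ)+1) := by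
        intro ⟨u, v⟩; exact hne (by rw [Prod.mk.injEq]; exact ⟨u, v⟩)
      rw [nuCan_mk]
      simp only [sgenk_apply k hk]
      split_ifs <;>
        exact ⟨by rw [mem_RB']; omega, by rw [ne_eq, Prod.mk.injEq]; omega⟩)
    (by simp only [sgenk_apply k hk]; split_ifs <;> first | exact (False.elim ‹False›) | omega)
    (by simp only [sgenk_apply k hk]; split_ifs <;> first | exact (False.elim ‹False›) | omega)
  exact this

/-- Step lemma: type `B`, generator `s_0`. -/
lemma NB_step_s0 (n : ℕ) (hn : 1 ≤ n) (w : Equiv.Perm ℤ)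
    (hwodd : ∀ x, w (-x) = -(w x)) :
    NB n (w * sgen 0) + (if w 1 < w (-1) then 1 else 0)
      = NB n w + (if w (-1) < w 1 then 1 else 0) := by
  have hnz : (1:ℤ) ≤ (n:ℤ) := by exact_mod_cast hn
  have := Ninv_step' (RB n) (sgen 0) w ((-1:ℤ), (1:ℤ))
    (by rw [mem_RB']; omega)
    sgen0_neg sgen0_sgen0 hwodd
    (fun p hp => by rw [mem_RB] at hp; exact ⟨hp.2.2.2.2.2.2.1, hp.2.2.2.2.2.2.2⟩)
    (by
      rintro ⟨a, b⟩ hp hne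
      rw [mem_RB'] at hp
      have hne' : ¬(a = (-1:ℤ) ∧ b = (1:ℤ)) := by
        intro ⟨u, v⟩; exact hne (by rw [Prod.mk.injEq]; exact ⟨u, v⟩)
      rw [nuCan_mk]
      simp only [sgen0_apply]
      split_ifs <;>
        exact ⟨by rw [mem_RB']; omega, by rw [ne_eq, Prod.mk.injEq]; omega⟩)
    (by simp only [sgen0_apply]; norm_num)
    (by simp only [sgen0_apply]; norm_num)
  exact this

/-- Step lemma: type `D`, generator `t_k = s_k`, `k ≥ 1`. -/
lemma ND_step_sk (n k : ℕ) (hk : 1 ≤ k) (hkn : k + 1 ≤ n) (w : Equiv.Perm ℤ)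
    (hwodd : ∀ x, w (-x) = -(w x)) :
    ND n (w * sgen k) + (if w ((k:ℤ)+1) < w (k:ℤ) then 1 else 0)
      = ND n w + (if w (k:ℤ) < w ((k:ℤ)+1) then 1 else 0) := by
  have hkz : (1:ℤ) ≤ (k:ℤ) := by exact_mod_cast hk
  have hkn' : (k:ℤ) + 1 ≤ (n:ℤ) := by exact_mod_cast hkn
  have := Ninv_step' (RD n) (sgen k) w ((k:ℤ), (k:ℤ)+1)
    (by rw [mem_RD']; omega)
    (sgenk_neg k hk) (sgenk_sgenk k hk) hwodd
    (fun p hp => by rw [mem_RD] at hp; exact ⟨hp.2.2.2.2.2.2.1, le_of_lt hp.2.2.2.2.2.2.2⟩)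
    (by
      rintro ⟨a, b⟩ hp hne
      rw [mem_RD'] at hp
      have hne' : ¬(a = (k:ℤ) ∧ b = (k:ℤ)+1) := by
        intro ⟨u, v⟩; exact hne (by rw [Prod.mk.injEq]; exact ⟨u, v⟩)
      rw [nuCan_mk]
      simp only [sgenk_apply k hk]
      split_ifs <;>
        exact ⟨by rw [mem_RD']; omega, by rw [ne_eq, Prod.mk.injEq]; omega⟩)
    (by simp only [sgenk_apply k hk]; split_ifs <;> first | exact (False.elim ‹False›) | omega)
    (by simp only [sgenk_apply k hk]; split_ifs <;> first | exact (False.elim ‹False›) | omega)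
  exact this

/-- Step lemma: type `D`, generator `t_0`. -/
lemma ND_step_t0 (n : ℕ) (hn : 2 ≤ n) (w : Equiv.Perm ℤ)
    (hwodd : ∀ x, w (-x) = -(w x)) :
    ND n (w * tgen 0) + (if w 2 < w (-1) then 1 else 0)
      = ND n w + (if w (-1) < w 2 then 1 else 0) := by
  have hnz : (2:ℤ) ≤ (n:ℤ) := by exact_mod_cast hn
  have := Ninv_step' (RD n) (tgen 0) w ((-1:ℤ), (2:ℤ))
    (by rw [mem_RD']; omega)
    tgen0_neg tgen0_tgen0 hwodd
    (fun p hp => by rw [mem_RD] at hp; exact ⟨hp.2.2.2.2.2.2.1, le_of_lt hp.2.2.2.2.2.2.2⟩)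
    (by
      rintro ⟨a, b⟩ hp hne
      rw [mem_RD'] at hp
      have hne' : ¬(a = (-1:ℤ) ∧ b = (2:ℤ)) := by
        intro ⟨u, v⟩; exact hne (by rw [Prod.mk.injEq]; exact ⟨u, v⟩)
      rw [nuCan_mk]
      simp only [tgen0_apply]
      split_ifs <;>
        exact ⟨by rw [mem_RD']; omega, by rw [ne_eq, Prod.mk.injEq]; omega⟩)
    (by simp only [tgen0_apply]; norm_num)
    (by simp only [tgen0_apply]; norm_num)
  exact this
lemma negCount_one (n : ℕ) : negCount n 1 = 0 := by
  unfold negCount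
  rw [Finset.card_eq_zero, Finset.filter_eq_empty_iff]
  intro i hi
  simp only [Finset.mem_Icc] at hi
  simp only [Equiv.Perm.one_apply]
  omega

lemma negCount_sk (n k : ℕ) (hk : 1 ≤ k) (hkn : k + 1 ≤ n) (w : Equiv.Perm ℤ) :
    negCount n (w * sgen k) = negCount n w := by
  have hkz : (1:ℤ) ≤ (k:ℤ) := by exact_mod_cast hk
  have hkn' : (k:ℤ) + 1 ≤ (n:ℤ) := by exact_mod_cast hkn
  unfold negCount
  refine Finset.card_bij' (fun i _ => sgen k i) (fun i _ => sgen k i) ?_ ?_ ?_ ?_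
  · intro i hi
    change i ∈ (Finset.Icc (1:ℤ) (n:ℤ)).filter (fun i => (w * sgen k) i < 0) at hi
    change sgen k i ∈ (Finset.Icc (1:ℤ) (n:ℤ)).filter (fun i => w i < 0)
    rw [Finset.mem_filter, Finset.mem_Icc] at hi ⊢
    simp only [Equiv.Perm.mul_apply] at hi ⊢
    refine ⟨?_, hi.2⟩
    have := hi.1
    simp only [sgenk_apply k hk]
    split_ifs <;> omega
  · intro i hi
    change i ∈ (Finset.Icc (1:ℤ) (n:ℤ)).filter (fun i => w i < 0) at hi
    change sgen k i ∈ (Finset.Icc (1:ℤ) (n:ℤ)).filter (fun i => (w * sgen k) i < 0)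
    rw [Finset.mem_filter, Finset.mem_Icc] at hi ⊢
    simp only [Equiv.Perm.mul_apply] at hi ⊢
    refine ⟨?_, ?_⟩
    · have := hi.1
      simp only [sgenk_apply k hk]
      split_ifs <;> omega
    · rw [sgenk_sgenk k hk]
      exact hi.2
  · intro i _; exact sgenk_sgenk k hk i
  · intro i _; exact sgenk_sgenk k hk i

lemma Icc_split (n : ℕ) (hn : 2 ≤ n) :
    Finset.Icc (1:ℤ) (n:ℤ) = {1, 2} ∪ Finset.Icc 3 (n:ℤ) := by
  have hnz : (2:ℤ) ≤ (n:ℤ) := by exact_mod_cast hn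
  ext i
  simp only [Finset.mem_Icc, Finset.mem_union, Finset.mem_insert, Finset.mem_singleton]
  omega

lemma negCount_split (n : ℕ) (hn : 2 ≤ n) (v : Equiv.Perm ℤ) :
    negCount n v = ((if v 1 < 0 then 1 else 0) + (if v 2 < 0 then 1 else 0))
      + ((Finset.Icc (3:ℤ) (n:ℤ)).filter (fun i => v i < 0)).card := by
  unfold negCount
  rw [Icc_split n hn, Finset.filter_union, Finset.card_union_of_disjoint]
  · congr 1
    have : ({1, 2} : Finset ℤ).filter (fun i => v i < 0)
        = (if v 1 < 0 then {1} else ∅) ∪ (if v 2 < 0 then {2} else ∅) := by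
      ext i
      simp only [Finset.mem_filter, Finset.mem_insert, Finset.mem_singleton, Finset.mem_union]
      split_ifs <;> simp <;>
        (try constructor) <;> (try rintro (rfl | rfl)) <;> (try rintro rfl) <;> simp_all <;> omega
    rw [this]
    rw [Finset.card_union_of_disjoint]
    · split_ifs <;> simp
    · split_ifs <;> simp
  · refine Finset.disjoint_filter_filter ?_
    rw [Finset.disjoint_left]
    intro a ha ha2
    simp only [Finset.mem_insert, Finset.mem_singleton] at ha
    simp only [Finset.mem_Icc] at ha2
    omega

lemma mul_tgen0_one (w : Equiv.Perm ℤ) (hodd : ∀ x, w (-x) = -(w x)) :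
    (w * tgen 0) 1 = -(w 2) := by
  have : tgen 0 1 = -2 := by rw [tgen0_apply]; norm_num
  rw [Equiv.Perm.mul_apply, this, hodd]

lemma mul_tgen0_two (w : Equiv.Perm ℤ) (hodd : ∀ x, w (-x) = -(w x)) :
    (w * tgen 0) 2 = -(w 1) := by
  have : tgen 0 2 = -1 := by rw [tgen0_apply]; norm_num
  rw [Equiv.Perm.mul_apply, this, hodd]

lemma negCount_t0_tail (n : ℕ) (w : Equiv.Perm ℤ) :
    ((Finset.Icc (3:ℤ) (n:ℤ)).filter (fun i => (w * tgen 0) i < 0)).card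
      = ((Finset.Icc (3:ℤ) (n:ℤ)).filter (fun i => w i < 0)).card := by
  congr 1
  refine Finset.filter_congr ?_
  intro i hi
  simp only [Finset.mem_Icc] at hi
  have : tgen 0 i = i := by rw [tgen0_apply]; split_ifs <;> omega
  rw [Equiv.Perm.mul_apply, this]

lemma negCount_t0_parity (n : ℕ) (hn : 2 ≤ n) (w : Equiv.Perm ℤ)
    (hodd : ∀ x, w (-x) = -(w x)) (h1 : w 1 ≠ 0) (h2 : w 2 ≠ 0) :
    Even (negCount n (w * tgen 0)) ↔ Even (negCount n w) := by
  rw [negCount_split n hn, negCount_split n hn, negCount_t0_tail,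
    mul_tgen0_one w hodd, mul_tgen0_two w hodd]
  rw [Nat.even_iff, Nat.even_iff]
  split_ifs <;> omega

lemma negCount_t0_dec (n : ℕ) (hn : 2 ≤ n) (w : Equiv.Perm ℤ)
    (hodd : ∀ x, w (-x) = -(w x)) (h1 : w 1 < 0) (h2 : w 2 < 0) :
    negCount n w = negCount n (w * tgen 0) + 2 := by
  rw [negCount_split n hn, negCount_split n hn, negCount_t0_tail,
    mul_tgen0_one w hodd, mul_tgen0_two w hodd]
  rw [if_pos h1, if_pos h2, if_neg (by omega), if_neg (by omega)]
  omega

lemma RD_eq_filter (n : ℕ) : RD n = (RB n).filter (fun p => 0 < p.1 + p.2) := by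
  ext ⟨a, b⟩
  rw [Finset.mem_filter, mem_RD', mem_RB']
  simp only
  constructor
  · intro h; exact ⟨by omega, by omega⟩
  · intro ⟨h, h2⟩; omega

lemma NB_eq_ND_add_negCount (n : ℕ) (w : Equiv.Perm ℤ)
    (hodd : ∀ x, w (-x) = -(w x)) :
    NB n w = ND n w + negCount n w := by
  unfold NB ND Ninv
  have key := Finset.card_filter_add_card_filter_not
    (s := (RB n).filter (fun p => w p.2 < w p.1)) (p := fun p => 0 < p.1 + p.2)
  rw [Finset.filter_filter, Finset.filter_filter] at key
  have e1 : (RB n).filter (fun p => w p.2 < w p.1 ∧ 0 < p.1 + p.2)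
      = (RD n).filter (fun p => w p.2 < w p.1) := by
    rw [RD_eq_filter, Finset.filter_filter]
    apply Finset.filter_congr
    intro p _
    simp [and_comm]
  have e2 : ((RB n).filter (fun p => w p.2 < w p.1 ∧ ¬ 0 < p.1 + p.2)).card
      = negCount n w := by
    unfold negCount
    refine Finset.card_bij' (fun p _ => p.2) (fun j _ => (-j, j)) ?_ ?_ ?_ ?_
    · rintro ⟨a, b⟩ hp
      rw [Finset.mem_filter, mem_RB'] at hp
      simp only [Finset.mem_filter, Finset.mem_Icc]
      obtain ⟨⟨u1, u2, u3, u4, u5, u6, u7, u8⟩, hc, hs⟩ := hp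
      simp only at hc hs
      have hab : a = -b := by omega
      subst hab
      refine ⟨⟨by omega, by omega⟩, ?_⟩
      rw [hodd] at hc
      omega
    · intro j hj
      simp only [Finset.mem_filter, Finset.mem_Icc] at hj
      rw [Finset.mem_filter, mem_RB']
      obtain ⟨⟨u1, u2⟩, hc⟩ := hj
      refine ⟨⟨by omega, by omega, by omega, by omega, by omega, by omega, by omega, by omega⟩, ?_, ?_⟩
      · simp only
        rw [hodd]
        omega
      · simp only
        omega
    · rintro ⟨a, b⟩ hp
      rw [Finset.mem_filter, mem_RB'] at hp
      have : a = -b := by omega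
      simp [this]
    · intro j _
      rfl
  rw [e1, e2] at key
  omega
lemma sgp_bound {n : ℕ} {w : Equiv.Perm ℤ} (hw : w ∈ signedPermGroup n) {i : ℤ}
    (h1 : -(n:ℤ) ≤ i) (h2 : i ≤ n) : -(n:ℤ) ≤ w i ∧ w i ≤ n := by
  by_contra hcon
  have habs : (n:ℤ) < |w i| := by rw [lt_abs]; omega
  have hfix := hw.2 (w i) habs
  have := w.injective hfix
  omega

lemma mono_of_adj {n : ℕ} {w : Equiv.Perm ℤ}
    (hadj : ∀ k : ℤ, 1 ≤ k → k + 1 ≤ n → w k ≤ w (k+1)) :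
    ∀ i j : ℤ, 1 ≤ i → i ≤ j → j ≤ n → w i ≤ w j := by
  intro i j h1 h2 h3
  have : ∀ j : ℤ, i ≤ j → (j ≤ n → w i ≤ w j) := by
    refine Int.le_induction ?_ ?_
    · intro; exact le_refl _
    · intro j hij ih hj
      exact le_trans (ih (by omega)) (hadj j (by omega) hj)
  exact this j h2 h3

lemma eq_one_of_pos_increasing {n : ℕ} {w : Equiv.Perm ℤ} (hw : w ∈ signedPermGroup n)
    (hpos : ∀ i : ℤ, 1 ≤ i → i ≤ n → 0 < w i)
    (hadj : ∀ k : ℤ, 1 ≤ k → k + 1 ≤ n → w k < w (k+1)) : w = 1 := by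
  have hup : ∀ i : ℤ, i ≤ (n:ℤ) → (1 ≤ i → w i ≤ i) := by
    refine Int.le_induction_down ?_ ?_
    · intro _; exact (sgp_bound hw (by omega) (by omega)).2
    · intro i hi ih h1
      have h2 : w (i-1) < w i := by
        have := hadj (i-1) h1 (by omega)
        simpa using this
      have := ih (by omega)
      omega
  have hdown : ∀ i : ℤ, 1 ≤ i → (i ≤ (n:ℤ) → i ≤ w i) := by
    refine Int.le_induction ?_ ?_
    · intro h; exact hpos 1 le_rfl h
    · intro i hi ih hj
      have := ih (by omega)
      have := hadj i hi hj
      omega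
  have hid : ∀ i : ℤ, 1 ≤ i → i ≤ (n:ℤ) → w i = i := by
    intro i h1 h2
    have := hup i h2 h1
    have := hdown i h1 h2
    omega
  ext x
  simp only [Equiv.Perm.one_apply]
  rcases lt_trichotomy x 0 with hx | rfl | hx
  · by_cases hxn : -(n:ℤ) ≤ x
    · have : w (-(-x)) = -(w (-x)) := hw.1 (-x)
      simp only [neg_neg] at this
      rw [this, hid (-x) (by omega) (by omega)]
      omega
    · exact hw.2 x (by rw [lt_abs]; omega)
  · exact sgp_zero hw
  · by_cases hxn : x ≤ (n:ℤ)
    · exact hid x (by omega) hxn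
    · exact hw.2 x (by rw [lt_abs]; omega)

lemma ND_zero_eq_one {n : ℕ} (hn : 2 ≤ n) {w : Equiv.Perm ℤ} (hw : w ∈ signedPermGroup n)
    (hnd : ND n w = 0) (heven : Even (negCount n w)) : w = 1 := by
  have hnz : (2:ℤ) ≤ (n:ℤ) := by exact_mod_cast hn
  have hno : ∀ p ∈ RD n, ¬ (w p.2 < w p.1) := by
    intro p hp hc
    have : p ∈ (RD n).filter (fun p => w p.2 < w p.1) := Finset.mem_filter.mpr ⟨hp, hc⟩
    rw [Finset.card_eq_zero.mp hnd] at this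
    exact absurd this (Finset.notMem_empty p)
  have hadj : ∀ k : ℤ, 1 ≤ k → k + 1 ≤ n → w k < w (k+1) := by
    intro k h1 h2
    have := hno ((k : ℤ), (k:ℤ)+1) (by rw [mem_RD']; omega)
    simp only [not_lt] at this
    rcases lt_or_eq_of_le this with h | h
    · exact h
    · exact absurd (w.injective h) (by omega)
  have hadj' : ∀ k : ℤ, 1 ≤ k → k + 1 ≤ n → w k ≤ w (k+1) := fun k a b => le_of_lt (hadj k a b)
  have h12 : 0 < w 1 + w 2 := by
    have := hno ((-1 : ℤ), (2:ℤ)) (by rw [mem_RD']; omega)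
    simp only [not_lt] at this
    have e : w (-1) = -(w 1) := hw.1 1
    rw [e] at this
    rcases lt_or_eq_of_le this with h | h
    · omega
    · exfalso
      have : w (-1) = w 2 := by rw [e]; omega
      have := w.injective this
      omega
  have h2pos : 0 < w 2 := by
    rcases lt_trichotomy (w 2) 0 with h | h | h
    · exfalso
      have h11 := hadj 1 le_rfl hnz
      norm_num at h11
      omega
    · exact absurd h (sgp_ne_zero hw (by omega))
    · exact h
  have hipos : ∀ i : ℤ, 2 ≤ i → i ≤ n → 0 < w i := by
    intro i hi hin
    have := mono_of_adj hadj' 2 i (by omega) hi hin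
    omega
  have h1pos : 0 < w 1 := by
    have hcount : negCount n w = if w 1 < 0 then 1 else 0 := by
      rw [negCount_split n hn w]
      have htail : ((Finset.Icc (3:ℤ) (n:ℤ)).filter (fun i => w i < 0)).card = 0 := by
        rw [Finset.card_eq_zero, Finset.filter_eq_empty_iff]
        intro i hi
        simp only [Finset.mem_Icc] at hi
        have := hipos i (by omega) (by omega)
        omega
      rw [htail]
      split_ifs <;> omega
    rw [hcount] at heven
    split_ifs at heven with h
    · exact absurd heven (by decide)
    · rcases lt_or_eq_of_le (not_lt.mp h) with h2 | h2
      · exact h2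
      · exact absurd h2.symm (sgp_ne_zero hw (by omega))
  refine eq_one_of_pos_increasing hw ?_ hadj
  intro i h1 h2
  rcases lt_or_eq_of_le h1 with h | h
  · exact hipos i (by omega) h2
  · rw [← h]; exact h1pos

lemma mem_tgen_set {n : ℕ} {y : Equiv.Perm ℤ} (hy : y ∈ tgen '' {i | i < n}) :
    ∃ i : ℕ, i < n ∧ y = tgen i := by
  obtain ⟨i, hi, rfl⟩ := hy
  exact ⟨i, hi, rfl⟩

lemma tgen_subset_sgp {n : ℕ} (hn : 2 ≤ n) : tgen '' {i | i < n} ⊆ (signedPermGroup n : Set (Equiv.Perm ℤ)) := by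
  rintro y ⟨i, hi, rfl⟩
  exact tgen_mem hn hi

lemma closure_le_sgp {n : ℕ} (hn : 2 ≤ n) {x : Equiv.Perm ℤ}
    (hx : x ∈ Subgroup.closure (tgen '' {i | i < n})) : x ∈ signedPermGroup n :=
  Subgroup.closure_le (signedPermGroup n) |>.mpr (tgen_subset_sgp hn) hx

lemma exists_list_of_closure {n : ℕ} {x : Equiv.Perm ℤ}
    (hx : x ∈ Subgroup.closure (tgen '' {i | i < n})) :
    ∃ l : List (Equiv.Perm ℤ), (∀ y ∈ l, y ∈ tgen '' {i | i < n}) ∧ l.prod = x := by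
  have main : ∃ l : List (Equiv.Perm ℤ),
      (∀ y ∈ l, y ∈ tgen '' {i | i < n} ∨ y⁻¹ ∈ tgen '' {i | i < n}) ∧ l.prod = x := by
    induction hx using Subgroup.closure_induction with
    | mem x hx =>
      refine ⟨[x], ?_, by simp⟩
      intro y hy
      simp only [List.mem_singleton] at hy
      subst hy
      exact Or.inl hx
    | one => exact ⟨[], by simp, by simp⟩
    | mul x y hx hy ihx ihy =>
      obtain ⟨l1, h1, e1⟩ := ihx; obtain ⟨l2, h2, e2⟩ := ihy
      refine ⟨l1 ++ l2, ?_, by simp [e1, e2]⟩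
      intro z hz
      rcases List.mem_append.mp hz with h|h
      exacts [h1 z h, h2 z h]
    | inv x hx ih =>
      obtain ⟨l, h1, e1⟩ := ih
      refine ⟨(l.map Inv.inv).reverse, ?_, by simp [← e1, List.prod_reverse_noncomm]⟩
      intro z hz
      simp only [List.mem_reverse, List.mem_map] at hz
      obtain ⟨a, ha, rfl⟩ := hz
      rcases h1 a ha with h|h
      · right; simpa using h
      · left; simpa using h
  obtain ⟨l, h1, e1⟩ := main
  refine ⟨l, ?_, e1⟩
  intro y hy
  rcases h1 y hy with h | h
  · exact h
  · obtain ⟨i, hi, he⟩ := mem_tgen_set h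
    have : y = tgen i := by
      have h3 : y = (y⁻¹)⁻¹ := by group
      have hti : (tgen i)⁻¹ = tgen i := by
        rw [inv_eq_iff_mul_eq_one]; exact tgen_invol i
      rw [h3, he, hti]
    rw [this]
    exact ⟨i, hi, rfl⟩

lemma even_negCount_of_list {n : ℕ} (hn : 2 ≤ n) :
    ∀ l : List (Equiv.Perm ℤ), (∀ y ∈ l, y ∈ tgen '' {i | i < n}) →
      Even (negCount n l.prod) := by
  intro l
  induction l using List.reverseRecOn with
  | nil => intro _; simp [negCount_one]
  | append_singleton l t ih =>
    intro hmem
    have hl : ∀ y ∈ l, y ∈ tgen '' {i | i < n} := fun y hy => hmem y (by simp [hy])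
    have ht : t ∈ tgen '' {i | i < n} := hmem t (by simp)
    obtain ⟨i, hi, rfl⟩ := mem_tgen_set ht
    have hw : l.prod ∈ signedPermGroup n :=
      Subgroup.list_prod_mem _ (fun y hy => tgen_subset_sgp hn (hl y hy))
    rw [List.prod_append, List.prod_singleton]
    rcases Nat.eq_zero_or_pos i with rfl | hk
    · rw [negCount_t0_parity n hn l.prod hw.1 (sgp_ne_zero hw (by omega))
        (sgp_ne_zero hw (by omega))]
      exact ih hl
    · rw [tgenk_eq i hk, negCount_sk n i hk (by omega)]
      exact ih hl

lemma even_negCount_of_closure {n : ℕ} (hn : 2 ≤ n) {x : Equiv.Perm ℤ}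
    (hx : x ∈ Subgroup.closure (tgen '' {i | i < n})) : Even (negCount n x) := by
  obtain ⟨l, h1, rfl⟩ := exists_list_of_closure hx
  exact even_negCount_of_list hn l h1

lemma ND_le_length {n : ℕ} (hn : 2 ≤ n) :
    ∀ l : List (Equiv.Perm ℤ), (∀ y ∈ l, y ∈ tgen '' {i | i < n}) →
      ND n l.prod ≤ l.length := by
  intro l
  induction l using List.reverseRecOn with
  | nil =>
    intro _
    have h0 : ND n ([] : List (Equiv.Perm ℤ)).prod = 0 := by
      rw [List.prod_nil, ND, Ninv, Finset.card_eq_zero, Finset.filter_eq_empty_iff]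
      rintro ⟨a, b⟩ hp
      rw [mem_RD'] at hp
      simp only [Equiv.Perm.one_apply, not_lt]
      omega
    omega
  | append_singleton l t ih =>
    intro hmem
    have hl : ∀ y ∈ l, y ∈ tgen '' {i | i < n} := fun y hy => hmem y (by simp [hy])
    have ht : t ∈ tgen '' {i | i < n} := hmem t (by simp)
    obtain ⟨i, hi, rfl⟩ := mem_tgen_set ht
    have hw : l.prod ∈ signedPermGroup n :=
      Subgroup.list_prod_mem _ (fun y hy => tgen_subset_sgp hn (hl y hy))
    rw [List.prod_append, List.prod_singleton, List.length_append]
    have ihl := ih hl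
    rcases Nat.eq_zero_or_pos i with rfl | hk
    · have := ND_step_t0 n hn l.prod hw.1
      simp only [List.length_singleton]
      split_ifs at this <;> omega
    · have := ND_step_sk n i hk (by omega) l.prod hw.1
      rw [tgenk_eq i hk]
      simp only [List.length_singleton]
      split_ifs at this <;> omega

lemma sgen_subset_sgp {n : ℕ} : sgen '' {i | i < n} ⊆ (signedPermGroup n : Set (Equiv.Perm ℤ)) := by
  rintro y ⟨i, hi, rfl⟩
  exact sgen_mem hi

lemma NB_le_length {n : ℕ} (hn : 1 ≤ n) :
    ∀ l : List (Equiv.Perm ℤ), (∀ y ∈ l, y ∈ sgen '' {i | i < n}) →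
      NB n l.prod ≤ l.length := by
  intro l
  induction l using List.reverseRecOn with
  | nil =>
    intro _
    have h0 : NB n ([] : List (Equiv.Perm ℤ)).prod = 0 := by
      rw [List.prod_nil, NB, Ninv, Finset.card_eq_zero, Finset.filter_eq_empty_iff]
      rintro ⟨a, b⟩ hp
      rw [mem_RB'] at hp
      simp only [Equiv.Perm.one_apply, not_lt]
      omega
    omega
  | append_singleton l t ih =>
    intro hmem
    have hl : ∀ y ∈ l, y ∈ sgen '' {i | i < n} := fun y hy => hmem y (by simp [hy])
    have ht : t ∈ sgen '' {i | i < n} := hmem t (by simp)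
    obtain ⟨i, hi, rfl⟩ : ∃ i : ℕ, i < n ∧ t = sgen i := by
      obtain ⟨i, hi, rfl⟩ := ht; exact ⟨i, hi, rfl⟩
    have hw : l.prod ∈ signedPermGroup n :=
      Subgroup.list_prod_mem _ (fun y hy => sgen_subset_sgp (hl y hy))
    rw [List.prod_append, List.prod_singleton, List.length_append]
    have ihl := ih hl
    rcases Nat.eq_zero_or_pos i with rfl | hk
    · have := NB_step_s0 n hn l.prod hw.1
      simp only [List.length_singleton]
      split_ifs at this <;> omega
    · have := NB_step_sk n i hk (by omega) l.prod hw.1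
      simp only [List.length_singleton]
      split_ifs at this <;> omega
/-- The substitution `t_0 ↦ s_0 s_1 s_0`, `t_i ↦ s_i` on letters. -/
def dsub (n : ℕ) (hn : 3 ≤ n) : Fin n → List (Fin n) := fun i =>
  if i.val = 0 then [Fin.castLE hn (0 : Fin 3), Fin.castLE hn (1 : Fin 3), Fin.castLE hn (0 : Fin 3)] else [i]

lemma exists_reduced_word (n : ℕ) (hn : 3 ≤ n) :
    ∀ m : ℕ, ∀ x : Equiv.Perm ℤ, x ∈ Subgroup.closure (tgen '' {i | i < n}) → ND n x = m →
    ∃ l : List (Fin n),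
      (l.map (fun i => tgen i.val)).prod = x ∧ l.length = ND n x ∧
      ((l.flatMap (dsub n hn)).map (fun i => sgen i.val)).prod = x ∧
      (l.flatMap (dsub n hn)).length = NB n x := by
  have hn2 : 2 ≤ n := by omega
  intro m
  induction m using Nat.strong_induction_on with
  | _ m ih =>
  intro x hx hND
  have hxsgp : x ∈ signedPermGroup n := closure_le_sgp hn2 hx
  have hodd := hxsgp.1
  have heven := even_negCount_of_closure hn2 hx
  rcases Nat.eq_zero_or_pos m with rfl | hm
  · have hx1 : x = 1 := ND_zero_eq_one hn2 hxsgp hND heven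
    subst hx1
    refine ⟨[], by simp, by simp [hND], by simp, ?_⟩
    have : NB n 1 = ND n 1 + negCount n 1 :=
      NB_eq_ND_add_negCount n 1 (by intro i; simp)
    have hnc := negCount_one n
    simp only [List.flatMap_nil, List.length_nil]
    omega
  obtain ⟨m', rfl⟩ : ∃ m', m = m' + 1 := ⟨m - 1, by omega⟩
  by_cases hdesc : ∃ k : ℕ, 1 ≤ k ∧ k + 1 ≤ n ∧ x ((k:ℤ)+1) < x (k:ℤ)
  · -- descend by s_k
    obtain ⟨k, hk1, hkn, hlt⟩ := hdesc
    have hkltn : k < n := by omega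
    have hx'mem : x * sgen k ∈ Subgroup.closure (tgen '' {i | i < n}) := by
      refine Subgroup.mul_mem _ hx (Subgroup.subset_closure ?_)
      exact ⟨k, hkltn, tgenk_eq k hk1⟩
    have hx'sgp : x * sgen k ∈ signedPermGroup n := closure_le_sgp hn2 hx'mem
    have hstep := ND_step_sk n k hk1 hkn x hodd
    rw [if_pos hlt, if_neg (by omega)] at hstep
    have hND' : ND n (x * sgen k) = m' := by omega
    obtain ⟨l, hl1, hl2, hl3, hl4⟩ := ih m' (by omega) (x * sgen k) hx'mem hND'
    have hNC : negCount n (x * sgen k) = negCount n x := negCount_sk n k hk1 hkn x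
    have hNB : NB n x = NB n (x * sgen k) + 1 := by
      have e1 := NB_eq_ND_add_negCount n x hodd
      have e2 := NB_eq_ND_add_negCount n (x * sgen k) hx'sgp.1
      omega
    have hxx : (x * sgen k) * sgen k = x := by
      rw [mul_assoc, sgenk_invol k hk1, mul_one]
    refine ⟨l ++ [⟨k, hkltn⟩], ?_, ?_, ?_, ?_⟩
    · rw [List.map_append, List.prod_append, hl1]
      simp only [List.map_cons, List.map_nil, List.prod_cons, List.prod_nil, mul_one]
      rw [tgenk_eq k hk1]
      exact hxx
    · rw [List.length_append, hl2, hND, hND']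
      simp
    · rw [List.flatMap_append, List.map_append, List.prod_append, hl3]
      have : dsub n hn ⟨k, hkltn⟩ = [⟨k, hkltn⟩] := by
        unfold dsub
        rw [if_neg (by simp; omega)]
      rw [List.flatMap_cons, List.flatMap_nil, this]
      simp only [List.append_nil, List.map_cons, List.map_nil, List.prod_cons, List.prod_nil,
        mul_one]
      exact hxx
    · rw [List.flatMap_append, List.length_append, hl4]
      have : dsub n hn ⟨k, hkltn⟩ = [⟨k, hkltn⟩] := by
        unfold dsub
        rw [if_neg (by simp; omega)]
      rw [List.flatMap_cons, List.flatMap_nil, this]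
      simp only [List.append_nil, List.length_cons, List.length_nil]
      omega
  · -- descend by t_0
    push_neg at hdesc
    have hadjZ : ∀ k : ℤ, 1 ≤ k → k + 1 ≤ (n:ℤ) → x k ≤ x (k+1) := by
      intro kz h1 h2
      obtain ⟨k, rfl⟩ : ∃ k : ℕ, (k:ℤ) = kz := ⟨kz.toNat, by omega⟩
      exact hdesc k (by omega) (by exact_mod_cast h2)
    have hmono := mono_of_adj hadjZ
    -- there is an inversion
    have hinv : ∃ p ∈ RD n, x p.2 < x p.1 := by
      have : 0 < ND n x := by omega
      rw [ND, Ninv] at this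
      obtain ⟨p, hp⟩ := Finset.card_pos.mp this
      rw [Finset.mem_filter] at hp
      exact ⟨p, hp.1, hp.2⟩
    have hsum12 : x 1 + x 2 < 0 := by
      obtain ⟨⟨a, b⟩, hp, hc⟩ := hinv
      rw [mem_RD'] at hp
      simp only at hc
      obtain ⟨u1, u2, u3, u4, u5, u6, u7, u8⟩ := hp
      rcases lt_trichotomy a 0 with ha | ha | ha
      · have hxa : x a = -(x (-a)) := by
          have := hodd (-a)
          simp only [neg_neg] at this
          omega
        have hb2 : 2 ≤ b := by omega
        have h1a : x 1 ≤ x (-a) := hmono 1 (-a) (by omega) (by omega) (by omega)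
        have h2b : x 2 ≤ x b := hmono 2 b (by omega) hb2 (by omega)
        omega
      · omega
      · have := hmono a b (by omega) (by omega) (by omega)
        omega
    have hx2 : x 2 < 0 := by
      by_contra hc
      have hx2pos : 0 < x 2 := by
        rcases lt_or_eq_of_le (not_lt.mp hc) with h | h
        · exact h
        · exact absurd h.symm (sgp_ne_zero hxsgp (by omega))
      have hcount : negCount n x = if x 1 < 0 then 1 else 0 := by
        rw [negCount_split n hn2 x]
        have htail : ((Finset.Icc (3:ℤ) (n:ℤ)).filter (fun i => x i < 0)).card = 0 := by
          rw [Finset.card_eq_zero, Finset.filter_eq_empty_iff]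
          intro i hi
          simp only [Finset.mem_Icc] at hi
          have := hmono 2 i (by omega) (by omega) (by omega)
          omega
        rw [htail]
        split_ifs <;> omega
      rw [hcount] at heven
      split_ifs at heven with h
      · exact absurd heven (by decide)
      · omega
    have hx1 : x 1 < 0 := by
      have := hmono 1 2 le_rfl (by omega) (by exact_mod_cast hn2)
      omega
    have hx'mem : x * tgen 0 ∈ Subgroup.closure (tgen '' {i | i < n}) := by
      refine Subgroup.mul_mem _ hx (Subgroup.subset_closure ?_)
      exact ⟨0, show (0:ℕ) < n by omega, rfl⟩
    have hx'sgp : x * tgen 0 ∈ signedPermGroup n := closure_le_sgp hn2 hx'mem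
    have hstep := ND_step_t0 n hn2 x hodd
    have hxm1 : x (-1) = -(x 1) := by
      have := hodd 1; omega
    rw [if_pos (by omega), if_neg (by omega)] at hstep
    have hND' : ND n (x * tgen 0) = m' := by omega
    obtain ⟨l, hl1, hl2, hl3, hl4⟩ := ih m' (by omega) (x * tgen 0) hx'mem hND'
    have hNC : negCount n x = negCount n (x * tgen 0) + 2 :=
      negCount_t0_dec n hn2 x hodd hx1 hx2
    have hNB : NB n x = NB n (x * tgen 0) + 3 := by
      have e1 := NB_eq_ND_add_negCount n x hodd
      have e2 := NB_eq_ND_add_negCount n (x * tgen 0) hx'sgp.1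
      omega
    have hxx : (x * tgen 0) * tgen 0 = x := by
      rw [mul_assoc, tgen_invol 0, mul_one]
    refine ⟨l ++ [⟨0, by omega⟩], ?_, ?_, ?_, ?_⟩
    · rw [List.map_append, List.prod_append, hl1]
      simp only [List.map_cons, List.map_nil, List.prod_cons, List.prod_nil, mul_one]
      exact hxx
    · rw [List.length_append, hl2, hND, hND']
      simp
    · rw [List.flatMap_append, List.map_append, List.prod_append, hl3]
      have hd0 : dsub n hn ⟨0, by omega⟩ = [⟨0, by omega⟩, ⟨1, by omega⟩, ⟨0, by omega⟩] := by
        unfold dsub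
        rw [if_pos rfl]
        rfl
      rw [List.flatMap_cons, List.flatMap_nil, hd0]
      simp only [List.append_nil, List.map_cons, List.map_nil, List.prod_cons, List.prod_nil,
        mul_one]
      have : sgen 0 * (sgen 1 * sgen 0) = tgen 0 := by
        rw [tgen]
        simp [mul_assoc]
      rw [this]
      exact hxx
    · rw [List.flatMap_append, List.length_append, hl4]
      have hd0 : dsub n hn ⟨0, by omega⟩ = [⟨0, by omega⟩, ⟨1, by omega⟩, ⟨0, by omega⟩] := by
        unfold dsub
        rw [if_pos rfl]
        rfl
      rw [List.flatMap_cons, List.flatMap_nil, hd0]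
      simp only [List.append_nil, List.length_cons, List.length_nil]
      omega
/-- Allcock's embedding is compatible with canonical positive lifts: if `LB` is the canonical
positive lift of signed permutations to the Artin group `A_{Bₙ}` (lifting reduced words in the
generators `s 0, …, s (n-1)`), `LD` is the canonical positive lift of elements of
`W_{Dₙ} = ⟨t 0, …, t (n-1)⟩` to `A_{Dₙ}` (lifting reduced words in `t 0, …, t (n-1)`), and
`ι : A_{Dₙ} → Ã_{Bₙ}` sends `τ₀ ↦ π₁(σ₀σ₁σ₀)`, `τᵢ ↦ π₁(σᵢ)`, then `π₁ (LB x) = ι (LD x)`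
for every `x ∈ W_{Dₙ}`. -/
theorem piOne_of_B_lift_eq_D_lift (n : ℕ) (hn : 3 ≤ n)
    (LB : Equiv.Perm ℤ → ArtinGroup (mB n))
    (hLB : ∀ (w : Equiv.Perm ℤ) (l : List (Fin n)),
      (l.map (fun i => sgen i.val)).prod = w →
      l.length = wordLength (sgen '' {i | i < n}) w →
      (l.map PresentedGroup.of).prod = LB w)
    (LD : Equiv.Perm ℤ → ArtinGroup (mD n))
    (hLD : ∀ (w : Equiv.Perm ℤ) (l : List (Fin n)),
      (l.map (fun i => tgen i.val)).prod = w →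
      l.length = wordLength (tgen '' {i | i < n}) w →
      (l.map PresentedGroup.of).prod = LD w)
    (ι : ArtinGroup (mD n) →* AtilB n)
    (hι0 : ι (PresentedGroup.of (⟨0, by omega⟩ : Fin n)) =
      piOne n (PresentedGroup.of (⟨0, by omega⟩ : Fin n) *
        PresentedGroup.of (⟨1, by omega⟩ : Fin n) *
        PresentedGroup.of (⟨0, by omega⟩ : Fin n)))
    (hιi : ∀ i : Fin n, 1 ≤ i.val → ι (PresentedGroup.of i) = piOne n (PresentedGroup.of i)) :
    ∀ x : Equiv.Perm ℤ, x ∈ Subgroup.closure (tgen '' {i | i < n}) →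
      piOne n (LB x) = ι (LD x) := by
  intro x hx
  have hn2 : 2 ≤ n := by omega
  obtain ⟨l, hD, hDlen, hB, hBlen⟩ := exists_reduced_word n hn (ND n x) x hx rfl
  -- word length identities
  have hWD : wordLength (tgen '' {i | i < n}) x = ND n x := by
    apply le_antisymm
    · apply Nat.sInf_le
      refine ⟨l.map (fun i => tgen i.val), ?_, ?_, ?_⟩
      · intro y hy
        simp only [List.mem_map] at hy
        obtain ⟨i, hi, rfl⟩ := hy
        exact ⟨i.val, i.isLt, rfl⟩
      · rw [List.length_map, hDlen]
      · rw [← hD]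
    · refine le_csInf ⟨ND n x, l.map (fun i => tgen i.val), ?_, ?_, ?_⟩ ?_
      · intro y hy
        simp only [List.mem_map] at hy
        obtain ⟨i, hi, rfl⟩ := hy
        exact ⟨i.val, i.isLt, rfl⟩
      · rw [List.length_map, hDlen]
      · rw [← hD]
      · rintro k ⟨l', hmem', hlen', hprod'⟩
        have := ND_le_length hn2 l' hmem'
        rw [hprod'] at this
        omega
  have hWB : wordLength (sgen '' {i | i < n}) x = NB n x := by
    apply le_antisymm
    · apply Nat.sInf_le
      refine ⟨(l.flatMap (dsub n hn)).map (fun i => sgen i.val), ?_, ?_, ?_⟩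
      · intro y hy
        simp only [List.mem_map] at hy
        obtain ⟨i, hi, rfl⟩ := hy
        exact ⟨i.val, i.isLt, rfl⟩
      · rw [List.length_map, hBlen]
      · rw [← hB]
    · refine le_csInf ⟨NB n x, (l.flatMap (dsub n hn)).map (fun i => sgen i.val), ?_, ?_, ?_⟩ ?_
      · intro y hy
        simp only [List.mem_map] at hy
        obtain ⟨i, hi, rfl⟩ := hy
        exact ⟨i.val, i.isLt, rfl⟩
      · rw [List.length_map, hBlen]
      · rw [← hB]
      · rintro k ⟨l', hmem', hlen', hprod'⟩
        have := NB_le_length (by omega) l' hmem'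
        rw [hprod'] at this
        omega
  have hLBx := hLB x (l.flatMap (dsub n hn)) hB (by rw [hBlen, hWB])
  have hLDx := hLD x l hD (by rw [hDlen, hWD])
  rw [← hLBx, ← hLDx, map_list_prod, map_list_prod, List.map_map, List.map_map]
  have key : ∀ i : Fin n, (((dsub n hn i)).map ((piOne n) ∘ PresentedGroup.of)).prod
      = ι (PresentedGroup.of i) := by
    intro i
    by_cases h0 : i.val = 0
    · have hieq : i = ⟨0, by omega⟩ := Fin.ext h0
      rw [hieq, hι0]
      unfold dsub
      rw [if_pos rfl]
      simp only [List.map_cons, List.map_nil, List.prod_cons, List.prod_nil, mul_one,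
        Function.comp_apply]
      rw [map_mul, map_mul, mul_assoc]
      rfl
    · have h1 : 1 ≤ i.val := by omega
      rw [hιi i h1]
      unfold dsub
      rw [if_neg h0]
      simp
  clear hD hDlen hB hBlen hWD hWB hLBx hLDx hx
  induction l with
  | nil => simp
  | cons a l ih =>
    rw [List.flatMap_cons, List.map_append, List.prod_append, key a, List.map_cons,
      List.prod_cons, ih]
    rfl
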